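/- On X = ℙ^2 × ℙ^1 with homogeneous coordinates [x_0:x_1:x_2], [y_0:y_1], the maps α = (x_0, x_1, y_0, y_1)^T : O → O(1,0)^{⊕2} ⊕ O(0,1)^{⊕2} and β = (y_0, y_1, -x_0, -x_1) : O(1,0)^{⊕2} ⊕ O(0,1)^{⊕2} → O(1,1) satisfy β∘α = 0, α is injective as a bundle map (nowhere vanishing), and β is surjective as a bundle map (nowhere vanishing), so they form a monad. -/
import Mathlib


/-!
STATEMENT 9.  On `X = ℙ² × ℙ¹`, with homogeneous coordinates
`[x₀:x₁:x₂] ∈ ℙ²` and `[y₀:y₁] ∈ ℙ¹` (represented by nonzero vectors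
`x : Fin 3 → ℂ`, `y : Fin 2 → ℂ`), the maps
`α = (x₀, x₁, y₀, y₁)ᵀ : 𝒪 → 𝒪(1,0)⊕² ⊕ 𝒪(0,1)⊕²` and
`β = (y₀, y₁, -x₀, -x₁) : 𝒪(1,0)⊕² ⊕ 𝒪(0,1)⊕² → 𝒪(1,1)`
satisfy, at every point of `X`: `β∘α = 0`, `α` has nowhere-vanishing fibre map
(injective bundle map), and `β` has nowhere-vanishing fibre map (surjective
bundle map); hence they form a monad.
-/
theorem stmt9 (x : Fin 3 → ℂ) (y : Fin 2 → ℂ) (hx : x ≠ 0) (hy : y ≠ 0) :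
    (∑ i : Fin 4, (![y 0, y 1, -x 0, -x 1] i) * (![x 0, x 1, y 0, y 1] i) = 0) ∧
    (![x 0, x 1, y 0, y 1] : Fin 4 → ℂ) ≠ 0 ∧
    (![y 0, y 1, -x 0, -x 1] : Fin 4 → ℂ) ≠ 0 := by
  have hy' : y 0 ≠ 0 ∨ y 1 ≠ 0 := by
    by_contra h
    push_neg at h
    apply hy
    funext i
    fin_cases i <;> simp [h.1, h.2]
  refine ⟨?_, ?_, ?_⟩
  · simp [Fin.sum_univ_four]
    ring
  · intro h
    rcases hy' with h0 | h0
    · exact h0 (by simpa using congrFun h 2)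
    · exact h0 (by simpa using congrFun h 3)
  · intro h
    rcases hy' with h0 | h0
    · exact h0 (by simpa using congrFun h 0)
    · exact h0 (by simpa using congrFun h 1)
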